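/- For every n ≥ 3 there exist n − 2 pairwise distinct nondecreasing n-tuples (x_1^{(h)}, …, x_n^{(h)}) of positive integers, 1 ≤ h ≤ n−2, such that for each h one has x_1^{(h)} = x_2^{(h)} = x_3^{(h)} = 2 and Σ_{1≤i<j≤n} 1/(x_i^{(h)} x_j^{(h)}) = 1 − 1/L_h, where L_h is the least common multiple of the pairwise products x_i^{(h)} x_j^{(h)} over all 1 ≤ i < j ≤ n. -/

import Mathlib

open Finset

def prs (k : ℕ) : Finset (Fin k × Fin k) := Finset.univ.filter fun p => p.1 < p.2

def emb1 (k : ℕ) : Fin k × Fin k ↪ Fin (k+1) × Fin (k+1) :=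
  ⟨fun p => (p.1.castSucc, p.2.castSucc), by
    intro p q h
    simp only [Prod.mk.injEq, Fin.castSucc_inj] at h
    exact Prod.ext h.1 h.2⟩

def emb2 (k : ℕ) : Fin k ↪ Fin (k+1) × Fin (k+1) :=
  ⟨fun i => (i.castSucc, Fin.last k), by
    intro i j h
    simp only [Prod.mk.injEq, Fin.castSucc_inj] at h
    exact h.1⟩

lemma prs_succ (k : ℕ) :
    prs (k+1) = ((prs k).map (emb1 k)) ∪ (Finset.univ.map (emb2 k)) := by
  ext p
  obtain ⟨p1, p2⟩ := p
  simp only [prs, mem_filter, mem_univ, true_and, mem_union, mem_map, emb1, emb2,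
    Function.Embedding.coeFn_mk, Prod.mk.injEq, Prod.exists]
  constructor
  · intro hlt
    rcases Fin.eq_castSucc_or_eq_last p2 with ⟨j, rfl⟩ | rfl
    · left
      have : p1 < Fin.last k := lt_of_lt_of_le hlt (Fin.le_last _)
      obtain ⟨i, rfl⟩ := Fin.eq_castSucc_or_eq_last p1 |>.resolve_right (by rintro rfl; exact absurd (Fin.castSucc_lt_last j) (by simpa using hlt.asymm))
      exact ⟨i, j, by simpa using hlt, rfl⟩
    · right
      have : p1 < Fin.last k := hlt
      obtain ⟨i, rfl⟩ := Fin.eq_castSucc_or_eq_last p1 |>.resolve_right (by rintro rfl; exact lt_irrefl _ hlt)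
      exact ⟨i, rfl⟩
  · rintro (⟨i, j, hij, rfl, rfl⟩ | ⟨i, rfl, rfl⟩)
    · simpa using hij
    · exact Fin.castSucc_lt_last i

lemma disj_prs (k : ℕ) : Disjoint ((prs k).map (emb1 k)) (Finset.univ.map (emb2 k)) := by
  simp only [Finset.disjoint_left, mem_map, emb1, emb2, Function.Embedding.coeFn_mk,
    Prod.exists]
  rintro p ⟨i, j, _, rfl⟩ hl
  obtain ⟨l, h1, h2⟩ := hl
  exact (Fin.castSucc_lt_last j).ne' (congrArg Prod.snd h2)

def Ssum {k : ℕ} (x : Fin k → ℕ) : ℚ := ∑ p ∈ prs k, 1 / (x p.1 * x p.2)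

def Lc {k : ℕ} (x : Fin k → ℕ) : ℕ := (prs k).lcm fun p => x p.1 * x p.2

lemma Ssum_snoc {k : ℕ} (x : Fin k → ℕ) (y : ℕ) :
    Ssum (Fin.snoc x y) = Ssum x + ∑ i : Fin k, 1 / ((x i : ℚ) * y) := by
  unfold Ssum
  rw [prs_succ, Finset.sum_union (disj_prs k), Finset.sum_map, Finset.sum_map]
  congr 1
  · apply Finset.sum_congr rfl
    intro p _
    simp only [show emb1 k p = (p.1.castSucc, p.2.castSucc) from rfl]
    simp [emb1, Fin.snoc_castSucc]
  · apply Finset.sum_congr rfl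
    intro i _
    simp only [show emb2 k i = (i.castSucc, Fin.last k) from rfl]
    simp [emb2, Fin.snoc_castSucc, Fin.snoc_last]

lemma Lc_snoc {k : ℕ} (x : Fin k → ℕ) (y : ℕ) :
    Lc (Fin.snoc x y) = Nat.lcm (Lc x) (Finset.univ.lcm fun i : Fin k => x i * y) := by
  unfold Lc
  rw [prs_succ, Finset.lcm_union, Finset.map_eq_image, Finset.map_eq_image,
    Finset.lcm_image, Finset.lcm_image]
  congr 1
  · apply Finset.lcm_congr rfl
    intro p _
    simp only [Function.comp_apply, show emb1 k p = (p.1.castSucc, p.2.castSucc) from rfl]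
    simp [emb1, Fin.snoc_castSucc]
  · apply Finset.lcm_congr rfl
    intro i _
    simp only [Function.comp_apply, show emb2 k i = (i.castSucc, Fin.last k) from rfl]
    simp [emb2, Fin.snoc_castSucc, Fin.snoc_last]

lemma pairprod_dvd_Lc {k : ℕ} (x : Fin k → ℕ) {i j : Fin k} (hij : i < j) :
    x i * x j ∣ Lc x := by
  have : (i, j) ∈ prs k := by simp [prs, hij]
  exact Finset.dvd_lcm (f := fun p : Fin k × Fin k => x p.1 * x p.2) this

lemma elem_dvd_Lc {k : ℕ} (x : Fin k → ℕ) (hk : 2 ≤ k) (i : Fin k) : x i ∣ Lc x := by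
  by_cases h : (i : ℕ) < k - 1
  · have hij : i < (⟨k-1, by omega⟩ : Fin k) := Fin.lt_def.2 h
    exact dvd_trans ⟨x ⟨k-1, by omega⟩, rfl⟩ (pairprod_dvd_Lc x hij)
  · have hij : (⟨0, by omega⟩ : Fin k) < i := Fin.lt_def.2 (by simp; omega)
    exact dvd_trans ⟨x ⟨0, by omega⟩, mul_comm _ _⟩ (pairprod_dvd_Lc x hij)

lemma Lc_ne_zero {k : ℕ} (x : Fin k → ℕ) (hpos : ∀ i, 0 < x i) : Lc x ≠ 0 := by
  intro h
  rw [Lc, Finset.lcm_eq_zero_iff] at h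
  obtain ⟨p, _, hp⟩ := h
  have h1 : x p.1 * x p.2 = 0 := hp
  have := mul_pos (hpos p.1) (hpos p.2)
  omega

lemma lcm_mul_right_finset {α : Type*} (s : Finset α) (f : α → ℕ) (y : ℕ)
    (hs : s.Nonempty) : (s.lcm fun i => f i * y) = s.lcm f * y := by
  classical
  induction hs using Finset.Nonempty.cons_induction with
  | singleton a => simp
  | cons a s ha hs ih =>
      rw [Finset.cons_eq_insert, Finset.lcm_insert, Finset.lcm_insert, ih]
      exact Nat.lcm_mul_right _ _ _

lemma fact_lcm_le {α : Type*} (s : Finset α) (f : α → ℕ) (p c : ℕ)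
    (h0 : ∀ b ∈ s, f b ≠ 0) (hc : ∀ b ∈ s, (f b).factorization p ≤ c) :
    (s.lcm f).factorization p ≤ c := by
  classical
  induction s using Finset.induction with
  | empty => simp
  | insert a s hnotmem ih =>
      rw [Finset.lcm_insert]
      have hfa : f a ≠ 0 := h0 a (Finset.mem_insert_self a s)
      have hls : s.lcm f ≠ 0 := by
        intro h
        rw [Finset.lcm_eq_zero_iff] at h
        obtain ⟨b, hb, hfb⟩ := h
        exact h0 b (Finset.mem_insert_of_mem hb) hfb
      have : GCDMonoid.lcm (f a) (s.lcm f) = Nat.lcm (f a) (s.lcm f) := rfl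
      rw [this, Nat.factorization_lcm hfa hls]
      simp only [Finsupp.sup_apply, sup_le_iff]
      exact ⟨hc a (Finset.mem_insert_self a s),
        ih (fun b hb => h0 b (Finset.mem_insert_of_mem hb))
           (fun b hb => hc b (Finset.mem_insert_of_mem hb))⟩

lemma pairprod_ne_dvd {k : ℕ} (x : Fin k → ℕ) {i j : Fin k} (hij : i ≠ j) :
    x i * x j ∣ Lc x := by
  rcases lt_or_gt_of_ne hij with h | h
  · exact pairprod_dvd_Lc x h
  · exact (mul_comm (x i) (x j)) ▸ pairprod_dvd_Lc x h

lemma two_mul_dvd {k : ℕ} (x : Fin (k+3) → ℕ)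
    (h2 : ∀ i : Fin (k+3), (i : ℕ) < 3 → x i = 2) (i : Fin (k+3)) :
    2 * x i ∣ Lc x := by
  by_cases h : i = ⟨0, by omega⟩
  · have e0 : x ⟨0, by omega⟩ = 2 := h2 _ (by simp)
    have e1 : x ⟨1, by omega⟩ = 2 := h2 _ (by simp)
    have := pairprod_ne_dvd x (i := (⟨0, by omega⟩ : Fin (k+3))) (j := ⟨1, by omega⟩)
      (by intro hc; simpa using congrArg Fin.val hc)
    rw [e0, e1] at this
    rw [h, e0]
    exact this
  · have e0 : x ⟨0, by omega⟩ = 2 := h2 _ (by simp)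
    have := pairprod_ne_dvd x (i := (⟨0, by omega⟩ : Fin (k+3))) (j := i) (fun hc => h hc.symm)
    rwa [e0] at this

lemma prime_dvd_m {k : ℕ} (x : Fin (k+3) → ℕ) (hpos : ∀ i, 0 < x i)
    {p : ℕ} {i j : Fin (k+3)} (hij : i ≠ j) (hi : p ∣ x i) (hj : p ∣ x j) :
    p ∣ ∑ t, Lc x / x t := by
  apply Finset.dvd_sum
  intro t _
  have hxt : x t ∣ Lc x := elem_dvd_Lc x (by omega) t
  rw [Nat.dvd_div_iff_mul_dvd hxt, mul_comm]
  rcases eq_or_ne t i with rfl | hti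
  · exact dvd_trans (mul_dvd_mul hj dvd_rfl) (pairprod_ne_dvd x hij.symm)
  · exact dvd_trans (mul_dvd_mul hi dvd_rfl) (pairprod_ne_dvd x hti.symm)

lemma xi_le_m {k : ℕ} (x : Fin (k+3) → ℕ) (hpos : ∀ i, 0 < x i)
    (h2 : ∀ i : Fin (k+3), (i : ℕ) < 3 → x i = 2) (i : Fin (k+3)) :
    x i ≤ ∑ t, Lc x / x t := by
  have hL : Lc x ≠ 0 := Lc_ne_zero x hpos
  have h1 : 2 * x i ≤ Lc x := Nat.le_of_dvd (Nat.pos_of_ne_zero hL) (two_mul_dvd x h2 i)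
  have e0 : x ⟨0, by omega⟩ = 2 := h2 _ (by simp)
  have h3 : x i ≤ Lc x / x ⟨0, by omega⟩ := by
    rw [e0, Nat.le_div_iff_mul_le (by norm_num)]
    omega
  exact le_trans h3 (Finset.single_le_sum (f := fun t => Lc x / x t)
    (fun t _ => Nat.zero_le _) (Finset.mem_univ _))

lemma core_lcm {k : ℕ} (x : Fin (k+3) → ℕ) (hpos : ∀ i, 0 < x i)
    (h2 : ∀ i : Fin (k+3), (i : ℕ) < 3 → x i = 2) {d y : ℕ}
    (hy : y = (∑ t, Lc x / x t) + d)
    (hd : d = 1 ∨ (d = 2 ∧ ∀ i : Fin (k+3), 3 ≤ (i : ℕ) → Odd (x i))) :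
    d * Nat.lcm (Lc x) (Finset.univ.lcm x * y) = Lc x * y := by
  set L := Lc x with hLdef
  set X := Finset.univ.lcm x with hXdef
  have hL0 : L ≠ 0 := Lc_ne_zero x hpos
  have hXdvdL : X ∣ L := Finset.lcm_dvd fun i _ => elem_dvd_Lc x (by omega) i
  have hX0 : X ≠ 0 := by
    intro h
    rw [h] at hXdvdL
    exact hL0 (Nat.eq_zero_of_zero_dvd hXdvdL)
  have hxiX : ∀ i, x i ∣ X := fun i => Finset.dvd_lcm (Finset.mem_univ i)
  have hd1 : 1 ≤ d := by rcases hd with rfl | ⟨rfl, _⟩ <;> norm_num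
  have e0 : x ⟨0, by omega⟩ = 2 := h2 _ (by simp)
  have e1 : x ⟨1, by omega⟩ = 2 := h2 _ (by simp)
  have hm2 : 2 ∣ (∑ t, L / x t) :=
    prime_dvd_m x hpos (i := ⟨0, by omega⟩) (j := ⟨1, by omega⟩)
      (by intro hc; simpa using congrArg Fin.val hc) ⟨1, by rw [e0, mul_one]⟩ ⟨1, by rw [e1, mul_one]⟩
  have hy0 : y ≠ 0 := by omega
  have h2X : 2 * X ∣ L := by
    have : (Finset.univ.lcm fun i : Fin (k+3) => x i * 2) ∣ L :=
      Finset.lcm_dvd fun i _ => (mul_comm 2 (x i)) ▸ two_mul_dvd x h2 i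
    rwa [lcm_mul_right_finset _ _ _ Finset.univ_nonempty, mul_comm X 2] at this
  have h4L : 4 ∣ L := by
    have := two_mul_dvd x h2 ⟨0, by omega⟩
    rwa [e0] at this
  -- direction 1 : d * lcm ∣ L * y
  have dir1 : d * Nat.lcm L (X * y) ∣ L * y := by
    rcases hd with rfl | ⟨rfl, _⟩
    · rw [one_mul]
      exact Nat.lcm_dvd (Dvd.intro y rfl) (mul_dvd_mul hXdvdL dvd_rfl)
    · obtain ⟨L2, hL2⟩ : 2 ∣ L := dvd_trans (by norm_num) h4L
      obtain ⟨y2, hy2⟩ : 2 ∣ y := by omega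
      have hXL2 : X ∣ L2 := by
        have : 2 * X ∣ 2 * L2 := hL2 ▸ h2X
        exact (mul_dvd_mul_iff_left (by norm_num : (2:ℕ) ≠ 0)).mp this
      have hmid : Nat.lcm L (X * y) ∣ L2 * y := by
        apply Nat.lcm_dvd
        · exact ⟨y2, by rw [hL2, hy2]; ring⟩
        · exact mul_dvd_mul hXL2 dvd_rfl
      calc 2 * Nat.lcm L (X * y) ∣ 2 * (L2 * y) := mul_dvd_mul dvd_rfl hmid
        _ = L * y := by rw [hL2]; ring
  -- direction 2 : L * y ∣ d * lcm
  have dir2 : L * y ∣ d * Nat.lcm L (X * y) := by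
    have hlcm0 : Nat.lcm L (X * y) ≠ 0 := Nat.lcm_ne_zero hL0 (mul_ne_zero hX0 hy0)
    rw [← Nat.factorization_le_iff_dvd (mul_ne_zero hL0 hy0)
      (mul_ne_zero (by omega) hlcm0), Finsupp.le_def]
    intro p
    rw [Nat.factorization_mul hL0 hy0, Nat.factorization_mul (by omega : d ≠ 0) hlcm0,
      Nat.factorization_lcm hL0 (mul_ne_zero hX0 hy0),
      Nat.factorization_mul hX0 hy0]
    simp only [Finsupp.coe_add, Pi.add_apply, Finsupp.sup_apply]
    by_cases hp : p.Prime
    · by_cases hpy : p ∣ y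
      · by_cases htwo : ∃ i j : Fin (k+3), i ≠ j ∧ p ∣ x i ∧ p ∣ x j
        · obtain ⟨i, j, hij, hi, hj⟩ := htwo
          have hpm : p ∣ (∑ t, L / x t) := prime_dvd_m x hpos hij hi hj
          have hpd : p ∣ d := by
            have h' := Nat.dvd_sub hpy hpm
            rwa [hy, Nat.add_sub_cancel_left] at h'
          rcases hd with rfl | ⟨rfl, hodd⟩
          · exact absurd (Nat.dvd_one.mp hpd) hp.ne_one
          · have hp2 : p = 2 := (Nat.prime_dvd_prime_iff_eq hp Nat.prime_two).mp hpd
            subst hp2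
            have hXf : 1 ≤ X.factorization 2 :=
              Nat.Prime.factorization_pos_of_dvd Nat.prime_two hX0
                (dvd_trans ⟨1, by rw [e0, mul_one]⟩ (hxiX ⟨0, by omega⟩))
            have hxle : ∀ i : Fin (k+3), (x i).factorization 2 ≤ 1 := by
              intro i
              by_cases h3 : (i : ℕ) < 3
              · rw [h2 i h3]
                rw [Nat.Prime.factorization_self Nat.prime_two]
              · have hnd : ¬ (2 ∣ x i) := by
                  rcases hodd i (by omega) with ⟨t, ht⟩
                  omega
                rw [Nat.factorization_eq_zero_of_not_dvd hnd]
                norm_num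
            have hLf : L.factorization 2 ≤ 2 := by
              apply fact_lcm_le
              · exact fun b _ => (mul_pos (hpos b.1) (hpos b.2)).ne'
              · intro b _
                rw [Nat.factorization_mul (hpos b.1).ne' (hpos b.2).ne']
                simp only [Finsupp.coe_add, Pi.add_apply]
                have := hxle b.1
                have := hxle b.2
                omega
            have hmax : X.factorization 2 + y.factorization 2 ≤
                max (L.factorization 2) (X.factorization 2 + y.factorization 2) :=
              le_max_right _ _
            have hyf : 1 ≤ y.factorization 2 :=
              Nat.Prime.factorization_pos_of_dvd Nat.prime_two hy0 hpy
            have hd2 : (2:ℕ).factorization 2 = 1 :=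
              Nat.Prime.factorization_self Nat.prime_two
            omega
        · push_neg at htwo
          have hLX : L.factorization p ≤ X.factorization p := by
            apply fact_lcm_le
            · exact fun b _ => (mul_pos (hpos b.1) (hpos b.2)).ne'
            · intro b hb
              have hb12 : b.1 ≠ b.2 := by
                simp only [prs, Finset.mem_filter] at hb
                exact ne_of_lt hb.2
              rw [Nat.factorization_mul (hpos b.1).ne' (hpos b.2).ne']
              simp only [Finsupp.coe_add, Pi.add_apply]
              by_cases h1 : p ∣ x b.1
              · have h2' : ¬ p ∣ x b.2 := htwo b.1 b.2 hb12 h1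
                rw [Nat.factorization_eq_zero_of_not_dvd h2', add_zero]
                exact (Nat.factorization_le_iff_dvd (hpos b.1).ne' hX0).mpr (hxiX b.1) p
              · rw [Nat.factorization_eq_zero_of_not_dvd h1, zero_add]
                exact (Nat.factorization_le_iff_dvd (hpos b.2).ne' hX0).mpr (hxiX b.2) p
          have hmax : X.factorization p + y.factorization p ≤
              max (L.factorization p) (X.factorization p + y.factorization p) :=
            le_max_right _ _
          omega
      · rw [Nat.factorization_eq_zero_of_not_dvd hpy]
        have hmax : L.factorization p ≤ max (L.factorization p)
            (X.factorization p + y.factorization p) := le_max_left _ _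
        omega
    · simp [Nat.factorization_eq_zero_of_not_prime _ hp]
  exact Nat.dvd_antisymm dir1 dir2

def OddTail {k : ℕ} (x : Fin k → ℕ) : Prop := ∀ i : Fin k, 3 ≤ (i : ℕ) → Odd (x i)

structure TInv {k : ℕ} (x : Fin (k+3) → ℕ) : Prop where
  pos : ∀ i, 0 < x i
  mono : Monotone x
  two : ∀ i : Fin (k+3), (i : ℕ) < 3 → x i = 2
  eq : Ssum x = 1 - 1 / (Lc x : ℚ)

def mval {k : ℕ} (x : Fin k → ℕ) : ℕ := ∑ t, Lc x / x t

def nxt {k : ℕ} (x : Fin (k+3) → ℕ) (d : ℕ) : Fin (k+1+3) → ℕ :=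
  Fin.snoc x (mval x + d)

lemma mono_snoc {k : ℕ} {x : Fin k → ℕ} {y : ℕ} (hm : Monotone x) (hy : ∀ i, x i ≤ y) :
    Monotone (Fin.snoc x y : Fin (k+1) → ℕ) := by
  intro a b hab
  rcases Fin.eq_castSucc_or_eq_last b with ⟨j, rfl⟩ | rfl
  · rcases Fin.eq_castSucc_or_eq_last a with ⟨i, rfl⟩ | rfl
    · rw [Fin.snoc_castSucc, Fin.snoc_castSucc]
      exact hm (Fin.castSucc_le_castSucc_iff.mp hab)
    · exact absurd hab (not_le.mpr (Fin.castSucc_lt_last j))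
  · rcases Fin.eq_castSucc_or_eq_last a with ⟨i, rfl⟩ | rfl
    · rw [Fin.snoc_castSucc, Fin.snoc_last]
      exact hy i
    · rw [Fin.snoc_last]

lemma m_even {k : ℕ} (x : Fin (k+3) → ℕ) (hpos : ∀ i, 0 < x i)
    (h2 : ∀ i : Fin (k+3), (i : ℕ) < 3 → x i = 2) : 2 ∣ mval x := by
  have e0 : x ⟨0, by omega⟩ = 2 := h2 _ (by simp)
  have e1 : x ⟨1, by omega⟩ = 2 := h2 _ (by simp)
  exact prime_dvd_m x hpos (i := ⟨0, by omega⟩) (j := ⟨1, by omega⟩)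
    (by intro hc; simpa using congrArg Fin.val hc) ⟨1, by rw [e0, mul_one]⟩
    ⟨1, by rw [e1, mul_one]⟩

lemma step {k : ℕ} (x : Fin (k+3) → ℕ) (hI : TInv x) {d : ℕ}
    (hd : d = 1 ∨ (d = 2 ∧ OddTail x)) : TInv (nxt x d) := by
  have hd1 : 1 ≤ d := by rcases hd with rfl | ⟨rfl, _⟩ <;> norm_num
  have hxm : ∀ i, x i ≤ mval x := fun i => xi_le_m x hI.pos hI.two i
  have hL0 : Lc x ≠ 0 := Lc_ne_zero x hI.pos
  have hcore := core_lcm x hI.pos hI.two (d := d) (y := mval x + d) rfl hd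
  set y := mval x + d with hydef
  have hy0 : y ≠ 0 := by omega
  constructor
  · intro i
    rcases Fin.eq_castSucc_or_eq_last i with ⟨j, rfl⟩ | rfl
    · rw [nxt, Fin.snoc_castSucc]; exact hI.pos j
    · rw [nxt, Fin.snoc_last]; omega
  · exact mono_snoc hI.mono (fun i => le_trans (hxm i) (by omega))
  · intro i hi
    have hlt : (i : ℕ) < k + 3 := by omega
    have hcast : i = Fin.castSucc ⟨(i : ℕ), hlt⟩ := Fin.ext rfl
    rw [hcast, nxt, Fin.snoc_castSucc]
    exact hI.two _ hi
  · -- the equation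
    have hXdvdL : Finset.univ.lcm x ∣ Lc x :=
      Finset.lcm_dvd fun i _ => elem_dvd_Lc x (by omega) i
    have hX0 : Finset.univ.lcm x ≠ 0 := by
      intro h
      rw [h] at hXdvdL
      exact hL0 (Nat.eq_zero_of_zero_dvd hXdvdL)
    have hLc_snoc : Lc (nxt x d) = Nat.lcm (Lc x) (Finset.univ.lcm x * y) := by
      rw [nxt, Lc_snoc, lcm_mul_right_finset _ _ _ Finset.univ_nonempty]
    have hΛ0 : Nat.lcm (Lc x) (Finset.univ.lcm x * y) ≠ 0 :=
      Nat.lcm_ne_zero hL0 (mul_ne_zero hX0 hy0)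
    have hsum : (∑ i : Fin (k+3), (1:ℚ) / ((x i : ℚ) * y)) =
        (mval x : ℚ) / ((Lc x : ℚ) * y) := by
      have : (mval x : ℚ) = ∑ t : Fin (k+3), ((Lc x : ℚ) / (x t : ℚ)) := by
        rw [mval, Nat.cast_sum]
        exact Finset.sum_congr rfl fun t _ =>
          Nat.cast_div (elem_dvd_Lc x (by omega) t)
            (by exact_mod_cast (hI.pos t).ne')
      rw [this, Finset.sum_div]
      apply Finset.sum_congr rfl
      intro t _
      have hxt : (x t : ℚ) ≠ 0 := by exact_mod_cast (hI.pos t).ne'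
      have hLq : (Lc x : ℚ) ≠ 0 := by exact_mod_cast hL0
      have hyq : (y : ℚ) ≠ 0 := by exact_mod_cast hy0
      field_simp
    have hcoreQ : (d : ℚ) * (Nat.lcm (Lc x) (Finset.univ.lcm x * y) : ℚ) =
        (Lc x : ℚ) * y := by exact_mod_cast hcore
    rw [show Ssum (nxt x d) = Ssum x + ∑ i : Fin (k+3), (1:ℚ) / ((x i : ℚ) * y) from
      Ssum_snoc x y, hI.eq, hsum, hLc_snoc]
    have hLq : (Lc x : ℚ) ≠ 0 := by exact_mod_cast hL0
    have hyq : (y : ℚ) ≠ 0 := by exact_mod_cast hy0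
    have hΛq : ((Nat.lcm (Lc x) (Finset.univ.lcm x * y) : ℕ) : ℚ) ≠ 0 := by
      exact_mod_cast hΛ0
    have h1Λ : (1:ℚ) / ((Nat.lcm (Lc x) (Finset.univ.lcm x * y) : ℕ) : ℚ) =
        (d : ℚ) / ((Lc x : ℚ) * y) := by
      rw [div_eq_div_iff hΛq (mul_ne_zero hLq hyq), one_mul]
      exact hcoreQ.symm
    rw [h1Λ]
    have hmy : ((mval x : ℕ) : ℚ) = (y : ℚ) - d := by
      rw [hydef]
      push_cast
      ring
    rw [hmy]
    field_simp
    ring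

lemma step_odd {k : ℕ} (x : Fin (k+3) → ℕ) (hI : TInv x) (ho : OddTail x) :
    OddTail (nxt x 1) := by
  intro i hi
  rcases Fin.eq_castSucc_or_eq_last i with ⟨j, rfl⟩ | rfl
  · rw [nxt, Fin.snoc_castSucc]
    exact ho j (by simpa using hi)
  · rw [nxt, Fin.snoc_last]
    obtain ⟨t, ht⟩ := m_even x hI.pos hI.two
    exact ⟨t, by omega⟩

lemma base_inv : TInv (fun _ : Fin (0+3) => 2) := by
  constructor
  · intro i; norm_num
  · intro a b _
    exact le_refl 2
  · intro i _
    rfl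
  · have hL : Lc (fun _ : Fin (0+3) => (2:ℕ)) = 4 := by decide
    have hcard : (prs 3).card = 3 := by decide
    rw [Ssum, hL]
    have : ∀ p ∈ prs 3, (1:ℚ) / (((fun _ : Fin (0+3) => (2:ℕ)) p.1 : ℚ) *
        ((fun _ : Fin (0+3) => (2:ℕ)) p.2 : ℚ)) = 1/4 := by
      intro p _; norm_num
    rw [Finset.sum_congr rfl this, Finset.sum_const, hcard]
    norm_num

def mvf (h : ℕ) : ℕ → ℕ := fun j => if j = h then 2 else 1

def build (f : ℕ → ℕ) : (k : ℕ) → (Fin (k+3) → ℕ)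
  | 0 => fun _ => 2
  | (k+1) => nxt (build f k) (f k)

lemma build_good (h : ℕ) : ∀ k, TInv (build (mvf h) k) ∧ (k ≤ h → OddTail (build (mvf h) k))
  | 0 => ⟨base_inv, fun _ => fun i hi => absurd i.isLt (by omega)⟩
  | (k+1) => by
      obtain ⟨hI, hO⟩ := build_good h k
      constructor
      · apply step _ hI
        by_cases hk : k = h
        · right
          exact ⟨by simp [mvf, hk], hO (le_of_eq hk)⟩
        · left
          simp [mvf, hk]
      · intro hk1
        have hk : k ≠ h := by omega
        have hmv : mvf h k = 1 := by simp [mvf, hk]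
        show OddTail (nxt (build (mvf h) k) (mvf h k))
        rw [hmv]
        exact step_odd _ hI (hO (by omega))

lemma build_castSucc (f : ℕ → ℕ) (k : ℕ) (i : Fin (k+3)) :
    build f (k+1) i.castSucc = build f k i := by
  show (Fin.snoc (build f k) (mval (build f k) + f k) : Fin (k+3+1) → ℕ) i.castSucc = _
  rw [Fin.snoc_castSucc]

lemma build_last (f : ℕ → ℕ) (k : ℕ) :
    build f (k+1) (Fin.last (k+3)) = mval (build f k) + f k := by
  show (Fin.snoc (build f k) (mval (build f k) + f k) : Fin (k+3+1) → ℕ) (Fin.last (k+3)) = _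
  rw [Fin.snoc_last]

lemma build_agree (f g : ℕ → ℕ) : ∀ k, (∀ j, j < k → f j = g j) → build f k = build g k
  | 0, _ => rfl
  | (k+1), hfg => by
      have ih : build f k = build g k := build_agree f g k (fun j hj => hfg j (by omega))
      show nxt (build f k) (f k) = nxt (build g k) (g k)
      rw [ih, hfg k (by omega)]

lemma build_prefix (f : ℕ → ℕ) (k : ℕ) :
    ∀ t (i : Fin (k+3)), build f (k+t) (Fin.castLE (by omega) i) = build f k i := by
  intro t
  induction t with
  | zero =>
      intro i
      have : (Fin.castLE (by omega : k+3 ≤ k+0+3) i) = i := Fin.ext rfl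
      rw [this]
      rfl
  | succ t ih =>
      intro i
      have hcast : (Fin.castLE (by omega : k+3 ≤ k+(t+1)+3) i) =
          Fin.castSucc (Fin.castLE (by omega : k+3 ≤ k+t+3) i) := Fin.ext rfl
      rw [hcast]
      show build f ((k+t)+1) ((Fin.castLE (by omega : k+3 ≤ k+t+3) i).castSucc) = _
      rw [build_castSucc f (k+t) (Fin.castLE (by omega) i), ih]

lemma build_ne (a b m : ℕ) (hab : a < b) (ham : a + 1 ≤ m) :
    build (mvf a) m ≠ build (mvf b) m := by
  obtain ⟨t, rfl⟩ : ∃ t, m = (a+1) + t := ⟨m - (a+1), by omega⟩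
  intro hEq
  have h1 := build_prefix (mvf a) (a+1) t (Fin.last (a+3))
  have h2 := build_prefix (mvf b) (a+1) t (Fin.last (a+3))
  rw [hEq] at h1
  rw [h1] at h2
  rw [build_last, build_last] at h2
  have hag : build (mvf a) a = build (mvf b) a :=
    build_agree _ _ a (fun j hj => by
      have hja : j ≠ a := by omega
      have hjb : j ≠ b := by omega
      simp [mvf, hja, hjb])
  rw [hag] at h2
  have hma : mvf a a = 2 := by simp [mvf]
  have hmb : mvf b a = 1 := by simp [mvf]; omega
  rw [hma, hmb] at h2
  omega


/-- For every `n ≥ 3` there exist `n − 2` pairwise distinct nondecreasing `n`-tuples of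
positive integers, each starting with `2, 2, 2`, such that each tuple satisfies
`Σ_{1≤i<j≤n} 1/(x_i x_j) = 1 − 1/L`, where `L` is the least common multiple of the
pairwise products `x_i x_j` over `1 ≤ i < j ≤ n`. -/
theorem stmt17 (n : ℕ) (hn : 3 ≤ n) :
    ∃ X : Fin (n - 2) → Fin n → ℕ,
      Function.Injective X ∧
      ∀ h : Fin (n - 2),
        (∀ i, 0 < X h i) ∧ Monotone (X h) ∧
        X h ⟨0, by omega⟩ = 2 ∧ X h ⟨1, by omega⟩ = 2 ∧ X h ⟨2, by omega⟩ = 2 ∧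
        ∑ p ∈ Finset.univ.filter (fun p : Fin n × Fin n => p.1 < p.2),
            (1 : ℚ) / (X h p.1 * X h p.2) =
          1 - 1 / ((Finset.univ.filter (fun p : Fin n × Fin n => p.1 < p.2)).lcm
              (fun p => X h p.1 * X h p.2) : ℕ) := by
  obtain ⟨m, rfl⟩ : ∃ m, n = m + 3 := ⟨n - 3, by omega⟩
  refine ⟨fun h i => build (mvf h.val) m i, ?_, ?_⟩
  · intro a b hEq
    by_contra hne
    have hvne : (a : ℕ) ≠ (b : ℕ) := fun hc => hne (Fin.ext hc)
    have hEq' : build (mvf a.val) m = build (mvf b.val) m := funext fun i => congrFun hEq i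
    rcases Nat.lt_trichotomy (a : ℕ) (b : ℕ) with hlt | heq | hgt
    · have ham : (a : ℕ) + 1 ≤ m := by
        have := b.isLt
        omega
      exact build_ne a.val b.val m hlt ham hEq'
    · exact hvne heq
    · have hbm : (b : ℕ) + 1 ≤ m := by
        have := a.isLt
        omega
      exact build_ne b.val a.val m hgt hbm hEq'.symm
  · intro h
    obtain ⟨hI, -⟩ := build_good h.val m
    refine ⟨hI.pos, hI.mono, hI.two _ (by norm_num), hI.two _ (by norm_num),
      hI.two _ (by norm_num), hI.eq⟩
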